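/- Let α, β be distinct nonzero complex numbers, q = αβ, U_n = (α^n - β^n)/(α-β), V_n = α^n + β^n, and fix k with U_k ≠ 0 and V_k^2 - 4q^k ≠ 0. Then for all j ≥ 3, Σ_{j_1 + j_2 + j_3 = j} U_{k j_1} U_{k j_2} U_{k j_3} = (U_k / (V_k^2 - 4q^k))^2 * ( (1/2)(j-1)(j-2) V_k^2 U_{kj} - q^k (2j+1)(j-2) V_k U_{k(j-1)} + 2 q^{2k} (j+1)(j-1) U_{k(j-2)} ). -/

import Mathlib

open Finset

lemma gs (x y : ℂ) (n : ℕ) :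
    (∑ p ∈ Finset.range (n + 1), x ^ p * y ^ (n - p)) * (x - y) = x ^ (n + 1) - y ^ (n + 1) := by
  have h := geom_sum₂_mul x y (n + 1)
  simpa using h

lemma LN (n : ℕ) : 2 * ∑ i ∈ Finset.range (n + 1), (((n : ℂ) - i) + 1) = ((n : ℂ) + 1) * ((n : ℂ) + 2) := by
  induction n with
  | zero => norm_num
  | succ n ih =>
    rw [Finset.sum_range_succ]
    have h : ∀ i ∈ Finset.range (n + 1), (((n + 1 : ℕ) : ℂ) - i) + 1 = (((n : ℂ) - i) + 1) + 1 := by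
      intro i hi; push_cast; ring
    rw [Finset.sum_congr rfl h, Finset.sum_add_distrib, Finset.sum_const, Finset.card_range]
    push_cast
    linear_combination ih

lemma LA (x y : ℂ) (n : ℕ) :
    (∑ i ∈ Finset.range (n + 1), (((n : ℂ) - i) + 1) * (x ^ i * y ^ (n - i))) * (x - y) ^ 2
      = x ^ (n + 2) - ((n : ℂ) + 2) * x * y ^ (n + 1) + ((n : ℂ) + 1) * y ^ (n + 2) := by
  induction n with
  | zero => norm_num; ring
  | succ n ih =>
    rw [Finset.sum_range_succ]
    have h : ∀ i ∈ Finset.range (n + 1),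
        ((((n + 1 : ℕ) : ℂ) - i) + 1) * (x ^ i * y ^ (n + 1 - i))
          = ((((n : ℂ) - i) + 1) * (x ^ i * y ^ (n - i))) * y + (x ^ i * y ^ (n - i)) * y := by
      intro i hi
      rw [Finset.mem_range] at hi
      have hy : y ^ (n + 1 - i) = y ^ (n - i) * y := by
        rw [← pow_succ]; congr 1; omega
      rw [hy]; push_cast; ring
    rw [Finset.sum_congr rfl h, Finset.sum_add_distrib, ← Finset.sum_mul, ← Finset.sum_mul]
    simp only [Nat.sub_self, pow_zero, mul_one]
    push_cast
    linear_combination y * ih + y * (x - y) * gs x y n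

lemma Tlem (x y : ℂ) (m : ℕ) :
    (∑ p ∈ Finset.range (m + 1), (x ^ p - y ^ p) * (x ^ (m - p) - y ^ (m - p))) * (x - y) ^ 2
      = ((m : ℂ) + 1) * (x ^ m + y ^ m) * (x - y) ^ 2
        - 2 * (x ^ (m + 1) - y ^ (m + 1)) * (x - y) := by
  have h : ∀ p ∈ Finset.range (m + 1),
      (x ^ p - y ^ p) * (x ^ (m - p) - y ^ (m - p))
        = (x ^ m + y ^ m) - x ^ p * y ^ (m - p) - y ^ p * x ^ (m - p) := by
    intro p hp
    rw [Finset.mem_range] at hp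
    have h1 : x ^ p * x ^ (m - p) = x ^ m := by rw [← pow_add]; congr 1; omega
    have h2 : y ^ p * y ^ (m - p) = y ^ m := by rw [← pow_add]; congr 1; omega
    linear_combination h1 + h2
  rw [Finset.sum_congr rfl h, Finset.sum_sub_distrib, Finset.sum_sub_distrib,
    Finset.sum_const, Finset.card_range, nsmul_eq_mul]
  push_cast
  linear_combination (-(x - y)) * gs x y m + (x - y) * gs y x m

lemma key (x y : ℂ) (j : ℕ) :
    2 * (∑ i ∈ Finset.range (j + 1), ∑ p ∈ Finset.range (j - i + 1),
        (x ^ i - y ^ i) * (x ^ p - y ^ p) * (x ^ (j - i - p) - y ^ (j - i - p))) * (x - y) ^ 2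
      = ((j : ℂ) + 1) * ((j : ℂ) + 2) * (x - y) ^ 2 * (x ^ j - y ^ j)
        + 2 * (x ^ (j + 2) - ((j : ℂ) + 2) * x * y ^ (j + 1) + ((j : ℂ) + 1) * y ^ (j + 2))
        - 2 * (y ^ (j + 2) - ((j : ℂ) + 2) * y * x ^ (j + 1) + ((j : ℂ) + 1) * x ^ (j + 2))
        + 4 * y * (x ^ (j + 1) - y ^ (j + 1)) + 4 * x * (x ^ (j + 1) - y ^ (j + 1))
        - 4 * ((j : ℂ) + 1) * (x - y) * (x ^ (j + 1) + y ^ (j + 1)) := by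
  have h1 : ∀ i ∈ Finset.range (j + 1),
      (∑ p ∈ Finset.range (j - i + 1),
          (x ^ i - y ^ i) * (x ^ p - y ^ p) * (x ^ (j - i - p) - y ^ (j - i - p))) * ((x - y) ^ 2)
        = (x ^ j - y ^ j) * (x - y) ^ 2 * (((j : ℂ) - i) + 1)
          + (x - y) ^ 2 * ((((j : ℂ) - i) + 1) * (x ^ i * y ^ (j - i)))
          - (x - y) ^ 2 * ((((j : ℂ) - i) + 1) * (y ^ i * x ^ (j - i)))
          + (2 * (x - y) * y) * (x ^ i * y ^ (j - i))
          + (2 * (x - y) * x) * (y ^ i * x ^ (j - i))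
          - 2 * (x - y) * (x ^ (j + 1) + y ^ (j + 1)) := by
    intro i hi
    rw [Finset.mem_range] at hi
    have hstep : ∀ p, (x ^ i - y ^ i) * (x ^ p - y ^ p) * (x ^ (j - i - p) - y ^ (j - i - p))
        = (x ^ i - y ^ i) * ((x ^ p - y ^ p) * (x ^ (j - i - p) - y ^ (j - i - p))) := by
      intro p; ring
    simp only [hstep]
    rw [← Finset.mul_sum, mul_comm (x ^ i - y ^ i)]
    have hc : ((j - i : ℕ) : ℂ) = (j : ℂ) - i := by
      rw [Nat.cast_sub (by omega)]
    have hT := Tlem x y (j - i)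
    rw [hc] at hT
    have hx : x ^ i * x ^ (j - i) = x ^ j := by rw [← pow_add]; congr 1; omega
    have hyy : y ^ i * y ^ (j - i) = y ^ j := by rw [← pow_add]; congr 1; omega
    linear_combination (x ^ i - y ^ i) * hT
      + ((((j : ℂ) - i) + 1) * (x - y) ^ 2 - 2 * (x - y) * x) * hx
      - ((((j : ℂ) - i) + 1) * (x - y) ^ 2 + 2 * (x - y) * y) * hyy
  calc 2 * (∑ i ∈ Finset.range (j + 1), ∑ p ∈ Finset.range (j - i + 1),
        (x ^ i - y ^ i) * (x ^ p - y ^ p) * (x ^ (j - i - p) - y ^ (j - i - p))) * (x - y) ^ 2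
      = 2 * ∑ i ∈ Finset.range (j + 1), ((∑ p ∈ Finset.range (j - i + 1),
          (x ^ i - y ^ i) * (x ^ p - y ^ p) * (x ^ (j - i - p) - y ^ (j - i - p))) * ((x - y) ^ 2)) := by
        rw [← Finset.sum_mul]; ring
    _ = 2 * ∑ i ∈ Finset.range (j + 1),
          ((x ^ j - y ^ j) * (x - y) ^ 2 * (((j : ℂ) - i) + 1)
          + (x - y) ^ 2 * ((((j : ℂ) - i) + 1) * (x ^ i * y ^ (j - i)))
          - (x - y) ^ 2 * ((((j : ℂ) - i) + 1) * (y ^ i * x ^ (j - i)))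
          + (2 * (x - y) * y) * (x ^ i * y ^ (j - i))
          + (2 * (x - y) * x) * (y ^ i * x ^ (j - i))
          - 2 * (x - y) * (x ^ (j + 1) + y ^ (j + 1))) := by
        rw [Finset.sum_congr rfl h1]
    _ = _ := by
        simp only [Finset.sum_add_distrib, Finset.sum_sub_distrib, ← Finset.mul_sum,
          Finset.sum_const, Finset.card_range, nsmul_eq_mul]
        have hg : (2 : ℂ) * ∑ i ∈ Finset.range (j + 1), (i : ℂ) = (j : ℂ) * ((j : ℂ) + 1) := by
          have h := Finset.sum_range_id_mul_two (j + 1)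
          simp only [Nat.add_sub_cancel] at h
          have h2 := congrArg (Nat.cast : ℕ → ℂ) h
          push_cast at h2
          linear_combination h2
        push_cast
        linear_combination (-(x ^ j - y ^ j) * (x - y) ^ 2) * hg
          + 2 * LA x y j - 2 * LA y x j + 4 * y * gs x y j - 4 * x * gs y x j

lemma sum_tuple3 (j : ℕ) (g : ℕ → ℕ → ℕ → ℂ) :
    ∑ f ∈ Finset.Nat.antidiagonalTuple 3 j, g (f 0) (f 1) (f 2)
      = ∑ i ∈ Finset.range (j + 1), ∑ p ∈ Finset.range (j - i + 1), g i p (j - i - p) := by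
  have h1 : ∑ f ∈ Finset.Nat.antidiagonalTuple 3 j, g (f 0) (f 1) (f 2)
      = ∑ s ∈ (Finset.HasAntidiagonal.antidiagonal j).sigma (fun im => Finset.HasAntidiagonal.antidiagonal im.2),
          g s.1.1 s.2.1 s.2.2 := by
    refine Finset.sum_nbij' (fun f => ⟨(f 0, f 1 + f 2), (f 1, f 2)⟩)
      (fun s => ![s.1.1, s.2.1, s.2.2]) ?_ ?_ ?_ ?_ ?_
    · intro f hf
      rw [Finset.Nat.mem_antidiagonalTuple, Fin.sum_univ_three] at hf
      exact Finset.mem_sigma.mpr ⟨by simp only [Finset.HasAntidiagonal.mem_antidiagonal]; omega,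
        by simp [Finset.HasAntidiagonal.mem_antidiagonal]⟩
    · rintro ⟨⟨a, b⟩, c, d⟩ hs
      simp only [Finset.mem_sigma, Finset.HasAntidiagonal.mem_antidiagonal] at hs
      rw [Finset.Nat.mem_antidiagonalTuple, Fin.sum_univ_three]
      simp only [Matrix.cons_val_zero, Matrix.cons_val_one, Matrix.head_cons,
        Matrix.cons_val_two, Matrix.tail_cons]
      omega
    · intro f hf
      funext i
      fin_cases i <;> simp
    · rintro ⟨⟨a, b⟩, c, d⟩ hs
      simp only [Finset.mem_sigma, Finset.HasAntidiagonal.mem_antidiagonal] at hs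
      simp only [Matrix.cons_val_zero, Matrix.cons_val_one, Matrix.head_cons,
        Matrix.cons_val_two, Matrix.tail_cons]
      obtain ⟨h1, h2⟩ := hs
      simp [h2]
    · intro f hf
      simp
  rw [h1, Finset.sum_sigma]
  rw [Finset.Nat.sum_antidiagonal_eq_sum_range_succ_mk
    (fun im => ∑ pr ∈ Finset.HasAntidiagonal.antidiagonal im.2, g im.1 pr.1 pr.2) j]
  refine Finset.sum_congr rfl fun i hi => ?_
  exact Finset.Nat.sum_antidiagonal_eq_sum_range_succ_mk (fun pr => g i pr.1 pr.2) (j - i)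

set_option maxHeartbeats 1600000 in
theorem self_convolution_three (α β : ℂ) (hαβ : α ≠ β) (hα : α ≠ 0) (hβ : β ≠ 0)
    (q : ℂ) (hq : q = α * β)
    (U V : ℕ → ℂ)
    (hU : ∀ n, U n = (α ^ n - β ^ n) / (α - β))
    (hV : ∀ n, V n = α ^ n + β ^ n)
    (k : ℕ) (hUk : U k ≠ 0) (hD : (V k) ^ 2 - 4 * q ^ k ≠ 0) :
    ∀ j : ℕ, 3 ≤ j →
      ∑ f ∈ Finset.Nat.antidiagonalTuple 3 j, U (k * f 0) * U (k * f 1) * U (k * f 2) =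
        (U k / ((V k) ^ 2 - 4 * q ^ k)) ^ 2 *
          ((1 / 2) * ((j : ℂ) - 1) * ((j : ℂ) - 2) * (V k) ^ 2 * U (k * j)
            - q ^ k * (2 * (j : ℂ) + 1) * ((j : ℂ) - 2) * V k * U (k * (j - 1))
            + 2 * q ^ (2 * k) * ((j : ℂ) + 1) * ((j : ℂ) - 1) * U (k * (j - 2))) := by
  intro j hj
  obtain ⟨n, rfl⟩ : ∃ n, j = n + 3 := ⟨j - 3, by omega⟩
  obtain ⟨x, hx⟩ : ∃ t : ℂ, t = α ^ k := ⟨_, rfl⟩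
  obtain ⟨y, hy⟩ : ∃ t : ℂ, t = β ^ k := ⟨_, rfl⟩
  obtain ⟨d, hdE⟩ : ∃ t : ℂ, t = α - β := ⟨_, rfl⟩
  have hd : d ≠ 0 := by rw [hdE]; exact sub_ne_zero.mpr hαβ
  have hxy : x - y ≠ 0 := by
    rw [hx, hy]
    intro h
    apply hUk
    rw [hU k, h, zero_div]
  have hUm : ∀ m : ℕ, U (k * m) = (x ^ m - y ^ m) / d := by
    intro m; rw [hU, pow_mul, pow_mul, ← hx, ← hy, ← hdE]
  have hqk : q ^ k = x * y := by rw [hq, mul_pow, ← hx, ← hy]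
  have hq2k : q ^ (2 * k) = (x * y) ^ 2 := by
    rw [two_mul, pow_add, hqk]; ring
  have e1 : n + 3 - 1 = n + 2 := by omega
  have e2 : n + 3 - 2 = n + 1 := by omega
  have hVk : V k = x + y := by rw [hV, ← hx, ← hy]
  have hUkk : U k = (x - y) / d := by rw [hU k, ← hx, ← hy, ← hdE]
  have hlhs : ∑ f ∈ Finset.Nat.antidiagonalTuple 3 (n + 3),
      U (k * f 0) * U (k * f 1) * U (k * f 2)
      = (∑ i ∈ Finset.range (n + 3 + 1), ∑ p ∈ Finset.range (n + 3 - i + 1),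
          (x ^ i - y ^ i) * (x ^ p - y ^ p) * (x ^ (n + 3 - i - p) - y ^ (n + 3 - i - p)))
        / d ^ 3 := by
    rw [← sum_tuple3 (n + 3) (fun a b c => (x ^ a - y ^ a) * (x ^ b - y ^ b) * (x ^ c - y ^ c)),
      Finset.sum_div]
    refine Finset.sum_congr rfl fun f _ => ?_
    rw [hUm, hUm, hUm]
    field_simp
  rw [hlhs, hVk, hUkk, hqk, hq2k, e1, e2, hUm, hUm, hUm]
  rw [show (x + y) ^ 2 - 4 * (x * y) = (x - y) ^ 2 by ring]
  have hk := key x y (n + 3)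
  push_cast at hk
  obtain ⟨F, hF⟩ : ∃ t : ℂ, (∑ i ∈ Finset.range (n + 3 + 1), ∑ p ∈ Finset.range (n + 3 - i + 1),
      (x ^ i - y ^ i) * (x ^ p - y ^ p) * (x ^ (n + 3 - i - p) - y ^ (n + 3 - i - p))) = t := ⟨_, rfl⟩
  rw [hF] at hk ⊢
  field_simp
  push_cast
  linear_combination hk
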